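/- For every fixed real number t ≥ 1, the univariate real polynomials J_P(x, t) and J_P(t, y), obtained by substituting y = t (respectively x = t) into the polymatroid Tutte polynomial J_P(x, y), are interpolating. -/

import Mathlib

open Finset

variable {n : ℕ}

/-- The set of bases of the integer polymatroid with rank function `f` on ground set `Fin n`:
integer vectors `a` with `a i ≥ 0`, `∑_{i ∈ I} a i ≤ f I` for every `I`, and `∑ i, a i = f [n]`.
(The upper bound `a i ≤ f {i}` used for the ambient finite set is implied by the constraints.) -/
noncomputable def PB (n : ℕ) (f : Finset (Fin n) → ℕ) : Finset (Fin n → ℤ) :=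
  (Fintype.piFinset fun i : Fin n => Finset.Icc (0 : ℤ) (f {i})).filter fun a =>
    (∀ I : Finset (Fin n), ∑ j ∈ I, a j ≤ (f I : ℤ)) ∧ ∑ j, a j = (f Finset.univ : ℤ)

/-- A set `I` is tight for `a` if `∑_{i ∈ I} a i = f I`. -/
def Tight (f : Finset (Fin n) → ℕ) (a : Fin n → ℤ) (I : Finset (Fin n)) : Prop :=
  ∑ i ∈ I, a i = (f I : ℤ)

/-- `i` is internally active with respect to `a`: `a - e_i + e_j ∉ PB` for every `j < i`. -/
def IntAct (f : Finset (Fin n) → ℕ) (a : Fin n → ℤ) (i : Fin n) : Prop :=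
  ∀ j : Fin n, j < i → a - Pi.single i 1 + Pi.single j 1 ∉ PB n f

/-- `i` is externally active with respect to `a`: `a + e_i - e_j ∉ PB` for every `j < i`. -/
def ExtAct (f : Finset (Fin n) → ℕ) (a : Fin n → ℤ) (i : Fin n) : Prop :=
  ∀ j : Fin n, j < i → a + Pi.single i 1 - Pi.single j 1 ∉ PB n f

open scoped Classical in
/-- `Int(a)`: the set of internally active indices. -/
noncomputable def IntSet (f : Finset (Fin n) → ℕ) (a : Fin n → ℤ) : Finset (Fin n) :=
  Finset.univ.filter fun i => IntAct f a i

open scoped Classical in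
/-- `Ext(a)`: the set of externally active indices. -/
noncomputable def ExtSet (f : Finset (Fin n) → ℕ) (a : Fin n → ℤ) : Finset (Fin n) :=
  Finset.univ.filter fun i => ExtAct f a i

/-- `ι(a) = |Int(a)|`, the internal activity. -/
noncomputable def iota (f : Finset (Fin n) → ℕ) (a : Fin n → ℤ) : ℕ := (IntSet f a).card

/-- `ε(a) = |Ext(a)|`, the external activity. -/
noncomputable def eps (f : Finset (Fin n) → ℕ) (a : Fin n → ℤ) : ℕ := (ExtSet f a).card

/-- `oi(a) = |Int(a) \ Ext(a)|`. -/
noncomputable def oi (f : Finset (Fin n) → ℕ) (a : Fin n → ℤ) : ℕ :=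
  (IntSet f a \ ExtSet f a).card

/-- `oe(a) = |Ext(a) \ Int(a)|`. -/
noncomputable def oe (f : Finset (Fin n) → ℕ) (a : Fin n → ℤ) : ℕ :=
  (ExtSet f a \ IntSet f a).card

/-- `ie(a) = |Int(a) ∩ Ext(a)|`. -/
noncomputable def ie (f : Finset (Fin n) → ℕ) (a : Fin n → ℤ) : ℕ :=
  (IntSet f a ∩ ExtSet f a).card

/-- A univariate polynomial is interpolating if its set of exponents with nonzero
coefficient is a set of consecutive integers. -/
def Interpolating {R : Type*} [Semiring R] (p : Polynomial R) : Prop :=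
  ∀ k l m : ℕ, k ≤ l → l ≤ m → p.coeff k ≠ 0 → p.coeff m ≠ 0 → p.coeff l ≠ 0

section Aux

variable {n : ℕ} {f : Finset (Fin n) → ℕ} {a : Fin n → ℤ}

lemma mem_PB_iff :
    a ∈ PB n f ↔ (∀ i, 0 ≤ a i) ∧ (∀ I : Finset (Fin n), ∑ j ∈ I, a j ≤ (f I : ℤ)) ∧
      ∑ j, a j = (f Finset.univ : ℤ) := by
  unfold PB
  rw [Finset.mem_filter, Fintype.mem_piFinset]
  simp only [Finset.mem_Icc]
  constructor
  · rintro ⟨h1, h2, h3⟩; exact ⟨fun i => (h1 i).1, h2, h3⟩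
  · rintro ⟨h1, h2, h3⟩
    refine ⟨fun i => ⟨h1 i, ?_⟩, h2, h3⟩
    have := h2 {i}; simpa using this

lemma sum_single (i : Fin n) (I : Finset (Fin n)) :
    ∑ x ∈ I, Pi.single (M := fun _ => ℤ) i 1 x = if i ∈ I then 1 else 0 := by
  simp [Pi.single_apply]

lemma sum_exch (a : Fin n → ℤ) (i j : Fin n) (I : Finset (Fin n)) :
    ∑ x ∈ I, (a - Pi.single i 1 + Pi.single j 1 : Fin n → ℤ) x
      = ∑ x ∈ I, a x - (if i ∈ I then 1 else 0) + (if j ∈ I then 1 else 0) := by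
  simp only [Pi.add_apply, Pi.sub_apply, Finset.sum_add_distrib, Finset.sum_sub_distrib,
    sum_single]

lemma sum_exch' (a : Fin n → ℤ) (i j : Fin n) (I : Finset (Fin n)) :
    ∑ x ∈ I, (a + Pi.single i 1 - Pi.single j 1 : Fin n → ℤ) x
      = ∑ x ∈ I, a x + (if i ∈ I then 1 else 0) - (if j ∈ I then 1 else 0) := by
  simp only [Pi.add_apply, Pi.sub_apply, Finset.sum_add_distrib, Finset.sum_sub_distrib,
    sum_single]

lemma exch_eq (a : Fin n → ℤ) (i j : Fin n) :
    a + Pi.single i 1 - Pi.single j 1 = a - Pi.single j 1 + Pi.single i 1 := by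
  ext x; simp only [Pi.add_apply, Pi.sub_apply]; ring

lemma exch_mem (ha : a ∈ PB n f) {i j : Fin n} (hij : j ≠ i) :
    a - Pi.single i 1 + Pi.single j 1 ∈ PB n f ↔
      1 ≤ a i ∧ ∀ I : Finset (Fin n), j ∈ I → i ∉ I → ∑ x ∈ I, a x < (f I : ℤ) := by
  obtain ⟨h0, hle, hsum⟩ := mem_PB_iff.1 ha
  rw [mem_PB_iff]
  constructor
  · rintro ⟨b0, ble, -⟩
    constructor
    · have := b0 i
      simp only [Pi.add_apply, Pi.sub_apply, Pi.single_eq_same,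
        Pi.single_eq_of_ne hij.symm] at this
      omega
    · intro I hjI hiI
      have := ble I
      rw [sum_exch] at this
      simp only [hjI, hiI, if_true, if_false] at this
      omega
  · rintro ⟨hai, hstrict⟩
    refine ⟨?_, ?_, ?_⟩
    · intro x
      have := h0 x
      by_cases hxi : x = i
      · subst hxi
        simp only [Pi.add_apply, Pi.sub_apply, Pi.single_eq_same,
          Pi.single_eq_of_ne hij.symm]
        omega
      · by_cases hxj : x = j
        · subst hxj
          simp only [Pi.add_apply, Pi.sub_apply, Pi.single_eq_same,
            Pi.single_eq_of_ne hij]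
          omega
        · simp only [Pi.add_apply, Pi.sub_apply, Pi.single_eq_of_ne hxi,
            Pi.single_eq_of_ne hxj]
          omega
    · intro I
      rw [sum_exch]
      by_cases hiI : i ∈ I <;> by_cases hjI : j ∈ I <;>
        simp only [hiI, hjI, if_true, if_false]
      · have := hle I; omega
      · have := hle I; omega
      · have := hstrict I hjI hiI; omega
      · have := hle I; omega
    · rw [sum_exch]
      simp only [Finset.mem_univ, if_true]
      omega

lemma tight_union_inter (hsub : ∀ I J : Finset (Fin n), f (I ∪ J) + f (I ∩ J) ≤ f I + f J)
    (ha : a ∈ PB n f) {I J : Finset (Fin n)}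
    (hI : Tight f a I) (hJ : Tight f a J) :
    Tight f a (I ∪ J) ∧ Tight f a (I ∩ J) := by
  obtain ⟨-, hle, -⟩ := mem_PB_iff.1 ha
  have h1 := hle (I ∪ J); have h2 := hle (I ∩ J)
  have hs : ∑ x ∈ I ∪ J, a x + ∑ x ∈ I ∩ J, a x = ∑ x ∈ I, a x + ∑ x ∈ J, a x :=
    Finset.sum_union_inter
  have hc : (f (I ∪ J) : ℤ) + (f (I ∩ J) : ℤ) ≤ (f I : ℤ) + (f J : ℤ) := by
    exact_mod_cast hsub I J
  unfold Tight at *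
  omega

lemma tight_empty (hf0 : f ∅ = 0) (a : Fin n → ℤ) : Tight f a ∅ := by
  simp [Tight, hf0]

lemma tight_univ (ha : a ∈ PB n f) : Tight f a Finset.univ := (mem_PB_iff.1 ha).2.2

end Aux

section Aux2

variable {n : ℕ} {f : Finset (Fin n) → ℕ} {a : Fin n → ℤ}

lemma exists_tight_sup (hsub : ∀ I J : Finset (Fin n), f (I ∪ J) + f (I ∩ J) ≤ f I + f J)
    (hf0 : f ∅ = 0) (ha : a ∈ PB n f) (k : Fin n) (Z : Finset (Fin n))
    (h : ∀ j ∈ Z, ∃ I, Tight f a I ∧ j ∈ I ∧ k ∉ I) :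
    ∃ S, Tight f a S ∧ (∀ j ∈ Z, j ∈ S) ∧ k ∉ S := by
  classical
  induction Z using Finset.cons_induction with
  | empty => exact ⟨∅, tight_empty hf0 a, by simp, by simp⟩
  | cons x Z hx ih =>
    obtain ⟨S, hS, hZS, hkS⟩ := ih fun j hj => h j (Finset.mem_cons_of_mem hj)
    obtain ⟨I, hI, hxI, hkI⟩ := h x (Finset.mem_cons_self x Z)
    refine ⟨S ∪ I, (tight_union_inter hsub ha hS hI).1, ?_, by simp [hkS, hkI]⟩
    intro j hj
    rcases Finset.mem_cons.1 hj with rfl | hj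
    · exact Finset.mem_union_right _ hxI
    · exact Finset.mem_union_left _ (hZS j hj)

lemma exists_tight_inf (hsub : ∀ I J : Finset (Fin n), f (I ∪ J) + f (I ∩ J) ≤ f I + f J)
    (ha : a ∈ PB n f) (k : Fin n) (Z : Finset (Fin n))
    (h : ∀ j ∈ Z, ∃ I, Tight f a I ∧ k ∈ I ∧ j ∉ I) :
    ∃ S, Tight f a S ∧ k ∈ S ∧ ∀ j ∈ Z, j ∉ S := by
  classical
  induction Z using Finset.cons_induction with
  | empty => exact ⟨Finset.univ, tight_univ ha, Finset.mem_univ _, by simp⟩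
  | cons x Z hx ih =>
    obtain ⟨S, hS, hkS, hZS⟩ := ih fun j hj => h j (Finset.mem_cons_of_mem hj)
    obtain ⟨I, hI, hkI, hxI⟩ := h x (Finset.mem_cons_self x Z)
    refine ⟨S ∩ I, (tight_union_inter hsub ha hS hI).2, Finset.mem_inter.2 ⟨hkS, hkI⟩, ?_⟩
    intro j hj hjSI
    rcases Finset.mem_cons.1 hj with rfl | hj
    · exact hxI (Finset.mem_inter.1 hjSI).2
    · exact hZS j hj (Finset.mem_inter.1 hjSI).1

lemma intAct_iff (hf0 : f ∅ = 0)
    (hsub : ∀ I J : Finset (Fin n), f (I ∪ J) + f (I ∩ J) ≤ f I + f J)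
    (ha : a ∈ PB n f) (k : Fin n) :
    IntAct f a k ↔ (a k = 0 ∨ ∃ S, Tight f a S ∧ (∀ m, m < k → m ∈ S) ∧ k ∉ S) := by
  constructor
  · intro h
    by_cases hak : a k = 0
    · exact Or.inl hak
    right
    have hak1 : 1 ≤ a k := by have := (mem_PB_iff.1 ha).1 k; omega
    have key : ∀ j ∈ Finset.Iio k, ∃ I, Tight f a I ∧ j ∈ I ∧ k ∉ I := by
      intro j hj
      rw [Finset.mem_Iio] at hj
      have hmem := h j hj
      rw [exch_mem ha (ne_of_lt hj)] at hmem
      push_neg at hmem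
      obtain ⟨I, hjI, hkI, hI⟩ := hmem hak1
      have hle := (mem_PB_iff.1 ha).2.1 I
      exact ⟨I, by unfold Tight; omega, hjI, hkI⟩
    obtain ⟨S, hS, hZS, hkS⟩ := exists_tight_sup hsub hf0 ha k _ key
    exact ⟨S, hS, fun m hm => hZS m (Finset.mem_Iio.2 hm), hkS⟩
  · rintro h j hj hmem
    rw [exch_mem ha (ne_of_lt hj)] at hmem
    obtain ⟨hak, hstrict⟩ := hmem
    rcases h with h0 | ⟨S, hS, hsup', hkS⟩
    · omega
    · have := hstrict S (hsup' j hj) hkS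
      unfold Tight at hS
      omega

lemma extAct_iff (hsub : ∀ I J : Finset (Fin n), f (I ∪ J) + f (I ∩ J) ≤ f I + f J)
    (ha : a ∈ PB n f) (k : Fin n) :
    ExtAct f a k ↔ ∃ S, Tight f a S ∧ k ∈ S ∧ ∀ j, j < k → 1 ≤ a j → j ∉ S := by
  classical
  constructor
  · intro h
    have key : ∀ j ∈ (Finset.Iio k).filter (fun j => 1 ≤ a j),
        ∃ I, Tight f a I ∧ k ∈ I ∧ j ∉ I := by
      intro j hj
      rw [Finset.mem_filter, Finset.mem_Iio] at hj
      have hmem := h j hj.1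
      rw [exch_eq, exch_mem ha (ne_of_lt hj.1).symm] at hmem
      push_neg at hmem
      obtain ⟨I, hkI, hjI, hI⟩ := hmem hj.2
      have hle := (mem_PB_iff.1 ha).2.1 I
      exact ⟨I, by unfold Tight; omega, hkI, hjI⟩
    obtain ⟨S, hS, hkS, hZ⟩ := exists_tight_inf hsub ha k _ key
    exact ⟨S, hS, hkS, fun j hj haj =>
      hZ j (Finset.mem_filter.2 ⟨Finset.mem_Iio.2 hj, haj⟩)⟩
  · rintro ⟨S, hS, hkS, hZ⟩ j hj hmem
    rw [exch_eq, exch_mem ha (ne_of_lt hj).symm] at hmem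
    obtain ⟨haj, hstrict⟩ := hmem
    have := hstrict S hkS (hZ j hj haj)
    unfold Tight at hS
    omega

lemma mem_IntSet_iff {k : Fin n} : k ∈ IntSet f a ↔ IntAct f a k := by
  simp [IntSet]

lemma mem_ExtSet_iff {k : Fin n} : k ∈ ExtSet f a ↔ ExtAct f a k := by
  simp [ExtSet]

lemma int_step (hf0 : f ∅ = 0)
    (hsub : ∀ I J : Finset (Fin n), f (I ∪ J) + f (I ∩ J) ≤ f I + f J)
    (ha : a ∈ PB n f) {i₀ j : Fin n}
    (hmin : ∀ m, m < i₀ → IntAct f a m) (hj : j < i₀)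
    (hb : a - Pi.single i₀ 1 + Pi.single j 1 ∈ PB n f) :
    IntSet f (a - Pi.single i₀ 1 + Pi.single j 1) ⊆ insert i₀ (IntSet f a) := by
  intro k hk
  rw [mem_IntSet_iff] at hk
  rcases lt_trichotomy k i₀ with h | h | h
  · exact Finset.mem_insert_of_mem (mem_IntSet_iff.2 (hmin k h))
  · exact h ▸ Finset.mem_insert_self _ _
  · refine Finset.mem_insert_of_mem (mem_IntSet_iff.2 ?_)
    rw [intAct_iff hf0 hsub ha]
    have hki : k ≠ i₀ := ne_of_gt h
    have hkj : k ≠ j := ne_of_gt (hj.trans h)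
    have hbk : (a - Pi.single i₀ 1 + Pi.single j 1 : Fin n → ℤ) k = a k := by
      simp [Pi.single_eq_of_ne hki, Pi.single_eq_of_ne hkj]
    rcases (intAct_iff hf0 hsub hb k).1 hk with h0 | ⟨S, hS, hsup, hkS⟩
    · left; rw [hbk] at h0; exact h0
    · right
      refine ⟨S, ?_, hsup, hkS⟩
      have hi₀S : i₀ ∈ S := hsup i₀ h
      have hjS : j ∈ S := hsup j (hj.trans h)
      unfold Tight at hS ⊢
      rw [sum_exch] at hS
      simp only [hi₀S, hjS, if_true] at hS
      omega

lemma ext_step (hsub : ∀ I J : Finset (Fin n), f (I ∪ J) + f (I ∩ J) ≤ f I + f J)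
    (ha : a ∈ PB n f) {i₀ j : Fin n}
    (hmin : ∀ m, m < i₀ → ExtAct f a m) (hj : j < i₀)
    (hb : a + Pi.single i₀ 1 - Pi.single j 1 ∈ PB n f) :
    ExtSet f (a + Pi.single i₀ 1 - Pi.single j 1) ⊆ insert i₀ (ExtSet f a) := by
  intro k hk
  rw [mem_ExtSet_iff] at hk
  rcases lt_trichotomy k i₀ with h | h | h
  · exact Finset.mem_insert_of_mem (mem_ExtSet_iff.2 (hmin k h))
  · exact h ▸ Finset.mem_insert_self _ _
  · refine Finset.mem_insert_of_mem (mem_ExtSet_iff.2 ?_)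
    rw [extAct_iff hsub ha]
    have hji : j ≠ i₀ := ne_of_lt hj
    obtain ⟨S, hS, hkS, hno⟩ := (extAct_iff hsub hb k).1 hk
    have hbi₀ : (a + Pi.single i₀ 1 - Pi.single j 1 : Fin n → ℤ) i₀ = a i₀ + 1 := by
      simp [Pi.single_eq_of_ne hji.symm]
    have h1 : (1 : ℤ) ≤ (a + Pi.single i₀ 1 - Pi.single j 1 : Fin n → ℤ) i₀ := by
      have := (mem_PB_iff.1 ha).1 i₀; omega
    have hi₀S : i₀ ∉ S := hno i₀ h h1
    have hleS := (mem_PB_iff.1 ha).2.1 S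
    have hjS : j ∉ S := by
      intro hjS
      unfold Tight at hS
      rw [sum_exch'] at hS
      simp only [hjS, if_true, hi₀S, if_false] at hS
      omega
    have hTa : Tight f a S := by
      unfold Tight at hS ⊢
      rw [sum_exch'] at hS
      simp only [hjS, hi₀S, if_false] at hS
      omega
    refine ⟨S, hTa, hkS, ?_⟩
    intro j' hj' haj'
    by_cases hj'j : j' = j
    · exact hj'j ▸ hjS
    · refine hno j' hj' ?_
      by_cases hj'i : j' = i₀
      · subst hj'i; omega
      · have : (a + Pi.single i₀ 1 - Pi.single j 1 : Fin n → ℤ) j' = a j' := by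
          simp [Pi.single_eq_of_ne hj'i, Pi.single_eq_of_ne hj'j]
        omega

end Aux2

section Aux3

variable {n : ℕ} {f : Finset (Fin n) → ℕ} {a : Fin n → ℤ}

lemma lex_lt_int (a : Fin n → ℤ) {i₀ j : Fin n} (hj : j < i₀) :
    toLex a < toLex (a - Pi.single i₀ 1 + Pi.single j 1 : Fin n → ℤ) := by
  refine ⟨j, fun m hm => ?_, ?_⟩
  · have hmi : m ≠ i₀ := ne_of_lt (hm.trans hj)
    have hmj : m ≠ j := ne_of_lt hm
    simp [Pi.single_eq_of_ne hmi, Pi.single_eq_of_ne hmj]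
  · have hji : j ≠ i₀ := ne_of_lt hj
    simp [Pi.single_eq_of_ne hji, Pi.single_eq_same]

lemma lex_lt_ext (a : Fin n → ℤ) {i₀ j : Fin n} (hj : j < i₀) :
    toLex (a + Pi.single i₀ 1 - Pi.single j 1 : Fin n → ℤ) < toLex a := by
  refine ⟨j, fun m hm => ?_, ?_⟩
  · have hmi : m ≠ i₀ := ne_of_lt (hm.trans hj)
    have hmj : m ≠ j := ne_of_lt hm
    simp [Pi.single_eq_of_ne hmi, Pi.single_eq_of_ne hmj]
  · have hji : j ≠ i₀ := ne_of_lt hj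
    simp [Pi.single_eq_of_ne hji, Pi.single_eq_same]

lemma iota_le (f : Finset (Fin n) → ℕ) (a : Fin n → ℤ) : iota f a ≤ n := by
  have := Finset.card_le_univ (IntSet f a)
  simpa [iota] using this

lemma eps_le (f : Finset (Fin n) → ℕ) (a : Fin n → ℤ) : eps f a ≤ n := by
  have := Finset.card_le_univ (ExtSet f a)
  simpa [eps] using this

lemma iota_exists (hf0 : f ∅ = 0)
    (hsub : ∀ I J : Finset (Fin n), f (I ∪ J) + f (I ∩ J) ≤ f I + f J)
    {k : ℕ} (hk : k ≤ n) (h : ∃ a ∈ PB n f, iota f a ≤ k) :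
    ∃ a ∈ PB n f, iota f a = k := by
  classical
  haveI : WellFoundedLT (Fin n) := Finite.to_wellFoundedLT
  set s := (PB n f).filter (fun a => iota f a ≤ k) with hs_def
  have hs : s.Nonempty := by
    obtain ⟨a, ha, hk'⟩ := h
    exact ⟨a, Finset.mem_filter.2 ⟨ha, hk'⟩⟩
  obtain ⟨a, has, hmax⟩ := Finset.exists_max_image s toLex hs
  rw [hs_def, Finset.mem_filter] at has
  obtain ⟨haPB, hak⟩ := has
  rcases eq_or_lt_of_le hak with heq | hlt
  · exact ⟨a, haPB, heq⟩
  exfalso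
  have hpassive : ∃ i, ¬ IntAct f a i := by
    by_contra hall
    push_neg at hall
    have huniv : IntSet f a = Finset.univ :=
      Finset.eq_univ_of_forall fun i => mem_IntSet_iff.2 (hall i)
    have : iota f a = n := by rw [iota, huniv, Finset.card_univ, Fintype.card_fin]
    omega
  set P := Finset.univ.filter (fun i => ¬ IntAct f a i) with hP_def
  have hPne : P.Nonempty := by
    obtain ⟨i, hi⟩ := hpassive
    exact ⟨i, Finset.mem_filter.2 ⟨Finset.mem_univ _, hi⟩⟩
  set i₀ := P.min' hPne with hi₀_def
  have hi₀P : i₀ ∈ P := Finset.min'_mem _ _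
  have hi₀ : ¬ IntAct f a i₀ := (Finset.mem_filter.1 hi₀P).2
  have hmin : ∀ m, m < i₀ → IntAct f a m := by
    intro m hm
    by_contra hmP
    have : i₀ ≤ m := Finset.min'_le P m (Finset.mem_filter.2 ⟨Finset.mem_univ m, hmP⟩)
    exact absurd hm (not_lt.2 this)
  rw [IntAct] at hi₀
  push_neg at hi₀
  obtain ⟨j, hj, hbPB⟩ := hi₀
  have hstep := int_step hf0 hsub haPB hmin hj hbPB
  have hbk : iota f (a - Pi.single i₀ 1 + Pi.single j 1) ≤ k := by
    calc (IntSet f _).card ≤ (insert i₀ (IntSet f a)).card := Finset.card_le_card hstep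
      _ ≤ iota f a + 1 := Finset.card_insert_le _ _
      _ ≤ k := by omega
  have hbs : (a - Pi.single i₀ 1 + Pi.single j 1 : Fin n → ℤ) ∈ s :=
    Finset.mem_filter.2 ⟨hbPB, hbk⟩
  exact absurd (lex_lt_int a hj) (not_lt.2 (hmax _ hbs))

lemma eps_exists (hsub : ∀ I J : Finset (Fin n), f (I ∪ J) + f (I ∩ J) ≤ f I + f J)
    {k : ℕ} (hk : k ≤ n) (h : ∃ a ∈ PB n f, eps f a ≤ k) :
    ∃ a ∈ PB n f, eps f a = k := by
  classical
  haveI : WellFoundedLT (Fin n) := Finite.to_wellFoundedLT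
  set s := (PB n f).filter (fun a => eps f a ≤ k) with hs_def
  have hs : s.Nonempty := by
    obtain ⟨a, ha, hk'⟩ := h
    exact ⟨a, Finset.mem_filter.2 ⟨ha, hk'⟩⟩
  obtain ⟨a, has, hminlex⟩ := Finset.exists_min_image s toLex hs
  rw [hs_def, Finset.mem_filter] at has
  obtain ⟨haPB, hak⟩ := has
  rcases eq_or_lt_of_le hak with heq | hlt
  · exact ⟨a, haPB, heq⟩
  exfalso
  have hpassive : ∃ i, ¬ ExtAct f a i := by
    by_contra hall
    push_neg at hall
    have huniv : ExtSet f a = Finset.univ :=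
      Finset.eq_univ_of_forall fun i => mem_ExtSet_iff.2 (hall i)
    have : eps f a = n := by rw [eps, huniv, Finset.card_univ, Fintype.card_fin]
    omega
  set P := Finset.univ.filter (fun i => ¬ ExtAct f a i) with hP_def
  have hPne : P.Nonempty := by
    obtain ⟨i, hi⟩ := hpassive
    exact ⟨i, Finset.mem_filter.2 ⟨Finset.mem_univ _, hi⟩⟩
  set i₀ := P.min' hPne with hi₀_def
  have hi₀P : i₀ ∈ P := Finset.min'_mem _ _
  have hi₀ : ¬ ExtAct f a i₀ := (Finset.mem_filter.1 hi₀P).2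
  have hmin : ∀ m, m < i₀ → ExtAct f a m := by
    intro m hm
    by_contra hmP
    have : i₀ ≤ m := Finset.min'_le P m (Finset.mem_filter.2 ⟨Finset.mem_univ m, hmP⟩)
    exact absurd hm (not_lt.2 this)
  rw [ExtAct] at hi₀
  push_neg at hi₀
  obtain ⟨j, hj, hbPB⟩ := hi₀
  have hstep := ext_step hsub haPB hmin hj hbPB
  have hbk : eps f (a + Pi.single i₀ 1 - Pi.single j 1) ≤ k := by
    calc (ExtSet f _).card ≤ (insert i₀ (ExtSet f a)).card := Finset.card_le_card hstep
      _ ≤ eps f a + 1 := Finset.card_insert_le _ _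
      _ ≤ k := by omega
  have hbs : (a + Pi.single i₀ 1 - Pi.single j 1 : Fin n → ℤ) ∈ s :=
    Finset.mem_filter.2 ⟨hbPB, hbk⟩
  exact absurd (lex_lt_ext a hj) (not_lt.2 (hminlex _ hbs))

end Aux3

section Aux4

variable {n : ℕ} {f : Finset (Fin n) → ℕ}

lemma term_coeff (t : ℝ) (o e i l : ℕ) :
    ((Polynomial.X : Polynomial ℝ) ^ o * Polynomial.C t ^ e *
        (Polynomial.X + Polynomial.C t - 1) ^ i).coeff l
      = if o ≤ l then t ^ e * ((t - 1) ^ (i - (l - o)) * (i.choose (l - o) : ℝ)) else 0 := by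
  have h1 : (Polynomial.X + Polynomial.C t - 1 : Polynomial ℝ)
      = Polynomial.X + Polynomial.C (t - 1) := by
    rw [Polynomial.C_sub, Polynomial.C_1]; ring
  have h2 : (Polynomial.X : Polynomial ℝ) ^ o * Polynomial.C t ^ e *
        (Polynomial.X + Polynomial.C t - 1) ^ i
      = Polynomial.C (t ^ e) * (Polynomial.X + Polynomial.C (t - 1)) ^ i *
          (Polynomial.X : Polynomial ℝ) ^ o := by
    rw [h1, ← Polynomial.C_pow]; ring
  rw [h2, Polynomial.coeff_mul_X_pow', Polynomial.coeff_C_mul,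
    Polynomial.coeff_X_add_C_pow]

lemma oi_add_ie (f : Finset (Fin n) → ℕ) (a : Fin n → ℤ) :
    oi f a + ie f a = iota f a :=
  Finset.card_sdiff_add_card_inter _ _

lemma oe_add_ie (f : Finset (Fin n) → ℕ) (a : Fin n → ℤ) :
    oe f a + ie f a = eps f a := by
  rw [oe, ie, Finset.inter_comm, eps]
  exact Finset.card_sdiff_add_card_inter _ _

lemma interp_generic (t : ℝ) (ht : 1 ≤ t) (g e i io : (Fin n → ℤ) → ℕ)
    (hgi : ∀ a ∈ PB n f, g a + i a = io a)
    (hion : ∀ a ∈ PB n f, io a ≤ n)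
    (hex : ∀ k : ℕ, k ≤ n → (∃ a ∈ PB n f, io a ≤ k) → ∃ a ∈ PB n f, io a = k) :
    Interpolating (∑ a ∈ PB n f, (Polynomial.X : Polynomial ℝ) ^ g a * Polynomial.C t ^ e a *
      (Polynomial.X + Polynomial.C t - 1) ^ i a) := by
  have ht0 : (0 : ℝ) < t := lt_of_lt_of_le one_pos ht
  have ht1 : (0 : ℝ) ≤ t - 1 := by linarith
  intro k l m hkl hlm hk hm
  have hcoeff : ∀ x : ℕ, (∑ a ∈ PB n f, (Polynomial.X : Polynomial ℝ) ^ g a *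
        Polynomial.C t ^ e a * (Polynomial.X + Polynomial.C t - 1) ^ i a).coeff x
      = ∑ a ∈ PB n f, (if g a ≤ x then
          t ^ e a * ((t - 1) ^ (i a - (x - g a)) * ((i a).choose (x - g a) : ℝ)) else 0) := by
    intro x
    rw [Polynomial.finset_sum_coeff]
    exact Finset.sum_congr rfl fun a _ => term_coeff t (g a) (e a) (i a) x
  have hnonneg : ∀ (a : Fin n → ℤ) (x : ℕ), (0:ℝ) ≤ (if g a ≤ x then
      t ^ e a * ((t - 1) ^ (i a - (x - g a)) * ((i a).choose (x - g a) : ℝ)) else 0) := by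
    intro a x
    split_ifs
    · positivity
    · exact le_refl 0
  have hwit : ∀ x : ℕ, (∑ a ∈ PB n f, (Polynomial.X : Polynomial ℝ) ^ g a *
        Polynomial.C t ^ e a * (Polynomial.X + Polynomial.C t - 1) ^ i a).coeff x ≠ 0 →
      ∃ a ∈ PB n f, g a ≤ x ∧ x ≤ io a ∧ (t = 1 → x = io a) := by
    intro x hx
    rw [hcoeff] at hx
    have : ∃ a ∈ PB n f, (if g a ≤ x then
        t ^ e a * ((t - 1) ^ (i a - (x - g a)) * ((i a).choose (x - g a) : ℝ)) else 0) ≠ 0 := by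
      by_contra hc
      push_neg at hc
      exact hx (Finset.sum_eq_zero hc)
    obtain ⟨a, haPB, hne⟩ := this
    rw [ne_eq, ite_eq_right_iff, not_forall] at hne
    obtain ⟨hgx, hne⟩ := hne
    have hchoose : ((i a).choose (x - g a) : ℝ) ≠ 0 := by
      intro h0; exact hne (by rw [h0, mul_zero, mul_zero])
    have hxle : x - g a ≤ i a := by
      by_contra hgt
      push_neg at hgt
      exact hchoose (by rw [Nat.choose_eq_zero_of_lt hgt, Nat.cast_zero])
    have hio := hgi a haPB
    refine ⟨a, haPB, hgx, by omega, ?_⟩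
    intro ht1'
    have hpow : ((t : ℝ) - 1) ^ (i a - (x - g a)) ≠ 0 := by
      intro h0; exact hne (by rw [h0, zero_mul, mul_zero])
    rw [ht1', sub_self] at hpow
    have : i a - (x - g a) = 0 := by
      by_contra hne0
      exact hpow (zero_pow hne0)
    omega
  obtain ⟨a₁, ha₁, hg₁, hle₁, ht₁⟩ := hwit k hk
  obtain ⟨a₂, ha₂, hg₂, hle₂, ht₂⟩ := hwit m hm
  have hln : l ≤ n := le_trans hlm (le_trans hle₂ (hion a₂ ha₂))
  have key : ∃ b ∈ PB n f, g b ≤ l ∧ l ≤ io b ∧ (t = 1 → l = io b) := by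
    by_cases hcase : ∃ a ∈ PB n f, io a ≤ l
    · obtain ⟨b, hb, hbl⟩ := hex l hln hcase
      have := hgi b hb
      exact ⟨b, hb, by omega, le_of_eq hbl.symm, fun _ => hbl.symm⟩
    · push_neg at hcase
      have hlt := hcase a₁ ha₁
      have htne : t ≠ 1 := by
        intro h1
        have := ht₁ h1
        omega
      exact ⟨a₁, ha₁, le_trans hg₁ hkl, le_of_lt hlt, fun h1 => absurd h1 htne⟩
  obtain ⟨b, hb, hgb, hlb, htb⟩ := key
  rw [hcoeff]
  have hgib := hgi b hb
  have hposb : (0:ℝ) < (if g b ≤ l then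
      t ^ e b * ((t - 1) ^ (i b - (l - g b)) * ((i b).choose (l - g b) : ℝ)) else 0) := by
    rw [if_pos hgb]
    have h1 : (0:ℝ) < t ^ e b := pow_pos ht0 _
    have h2 : (0:ℝ) < ((i b).choose (l - g b) : ℝ) := by
      have : l - g b ≤ i b := by omega
      exact_mod_cast Nat.choose_pos this
    have h3 : (0:ℝ) < (t - 1) ^ (i b - (l - g b)) := by
      rcases eq_or_lt_of_le ht with h | h
      · have hlb' := htb h.symm
        have hz : i b - (l - g b) = 0 := by omega
        rw [hz, pow_zero]; norm_num
      · exact pow_pos (by linarith) _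
    exact mul_pos h1 (mul_pos h3 h2)
  have hpos : (0:ℝ) < ∑ a ∈ PB n f, (if g a ≤ l then
      t ^ e a * ((t - 1) ^ (i a - (l - g a)) * ((i a).choose (l - g a) : ℝ)) else 0) :=
    Finset.sum_pos' (fun a _ => hnonneg a l) ⟨b, hb, hposb⟩
  exact ne_of_gt hpos

end Aux4


/-- For every real `t ≥ 1`, the specializations `J_P(x,t)` and `J_P(t,y)` of the
polymatroid Tutte polynomial are interpolating. -/
theorem J_x_t_and_t_y_interpolating
    (n : ℕ) (hn : 0 < n) (f : Finset (Fin n) → ℕ)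
    (hf0 : f ∅ = 0)
    (hmono : ∀ I J : Finset (Fin n), I ⊆ J → f I ≤ f J)
    (hsub : ∀ I J : Finset (Fin n), f (I ∪ J) + f (I ∩ J) ≤ f I + f J)
    (t : ℝ) (ht : 1 ≤ t) :
    Interpolating (∑ a ∈ PB n f,
        (Polynomial.X : Polynomial ℝ) ^ oi f a * Polynomial.C t ^ oe f a *
          (Polynomial.X + Polynomial.C t - 1) ^ ie f a) ∧
    Interpolating (∑ a ∈ PB n f,
        Polynomial.C t ^ oi f a * (Polynomial.X : Polynomial ℝ) ^ oe f a *
          (Polynomial.C t + Polynomial.X - 1) ^ ie f a) := by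
  constructor
  · exact interp_generic t ht (oi f) (oe f) (ie f) (iota f)
      (fun a _ => oi_add_ie f a) (fun a _ => iota_le f a)
      (fun k hk h => iota_exists hf0 hsub hk h)
  · have hrw : (∑ a ∈ PB n f,
        Polynomial.C t ^ oi f a * (Polynomial.X : Polynomial ℝ) ^ oe f a *
          (Polynomial.C t + Polynomial.X - 1) ^ ie f a)
      = ∑ a ∈ PB n f, (Polynomial.X : Polynomial ℝ) ^ oe f a * Polynomial.C t ^ oi f a *
          (Polynomial.X + Polynomial.C t - 1) ^ ie f a :=
      Finset.sum_congr rfl fun a _ => by ring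
    rw [hrw]
    exact interp_generic t ht (oe f) (oi f) (ie f) (eps f)
      (fun a _ => oe_add_ie f a) (fun a _ => eps_le f a)
      (fun k hk h => eps_exists hsub hk h)
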